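/- Let n ≥ 4 and let G be the cyclic subgroup of Sym([n]) generated by the n-cycle (1 2 ... n). For every system V of subsets V_1,...,V_n of [n], G satisfies the (n-1)-orbit condition subject to V if and only if G has a G-marriage subject to V. -/

import Mathlib

open Fin.CommRing

/-- arithmetic-progression tuple of length `k` in `Fin (k+1)` starting at `d`;
its entries are exactly `Fin (k+1) \ {d-1}`. -/
def apT (k : ℕ) (d : Fin (k+1)) : Fin k → Fin (k+1) :=
  fun j => d + Fin.castLE (Nat.le_succ k) j

lemma apT_apply (k : ℕ) (d : Fin (k+1)) (j : Fin k) :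
    apT k d j = d + Fin.castLE (Nat.le_succ k) j := rfl

lemma apT_surj {k : ℕ} {d x : Fin (k+1)} (h : x + 1 ≠ d) : ∃ j : Fin k, apT k d j = x := by
  have hval : (x - d).val < k + 1 := (x - d).isLt
  have hne : (x - d).val ≠ k := by
    intro hk'
    apply h
    have hxd : x - d = (-1 : Fin (k+1)) := by
      apply Fin.val_injective
      rw [Fin.coe_neg_one]
      exact hk'
    linear_combination hxd
  refine ⟨⟨(x - d).val, by omega⟩, ?_⟩
  rw [apT_apply]
  have hcast : Fin.castLE (Nat.le_succ k) ⟨(x - d).val, by omega⟩ = x - d := by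
    apply Fin.val_injective
    simp [Fin.castLE]
  rw [hcast]; ring

lemma rot_pow (k c : ℕ) : ∀ x : Fin (k+1),
    ((finRotate (k+1)) ^ c) x = x + (c : Fin (k+1)) := by
  induction c with
  | zero => intro x; simp
  | succ c ih =>
    intro x
    rw [pow_succ, Equiv.Perm.mul_apply, finRotate_succ_apply, ih (x+1)]
    push_cast
    ring

lemma mem_zpowers_c {k : ℕ} {g : Equiv.Perm (Fin (k+1))}
    (hg : g ∈ Subgroup.zpowers (finRotate (k+1))) :
    ∃ c : Fin (k+1), ∀ x, g x = x + c := by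
  obtain ⟨z, rfl⟩ := Subgroup.mem_zpowers_iff.mp hg
  cases z with
  | ofNat c =>
    refine ⟨(c : Fin (k+1)), fun x => ?_⟩
    rw [show (Int.ofNat c) = (c : ℤ) from rfl, zpow_natCast, rot_pow]
  | negSucc c =>
    refine ⟨-((c+1 : ℕ) : Fin (k+1)), fun x => ?_⟩
    rw [zpow_negSucc]
    apply (Equiv.injective ((finRotate (k+1)) ^ (c+1)))
    rw [Equiv.Perm.coe_inv, Equiv.apply_symm_apply, rot_pow]
    ring

lemma core (k : ℕ) (hk : 3 ≤ k) (V : Fin (k+1) → Set (Fin (k+1)))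
    (H : ∀ Y : Set (Fin k → Fin (k+1)), Y.Nonempty →
      ∃ c : Fin (k+1), ∀ y ∈ Y, ∃ z ∈ Y, ∀ j, y j + c ∈ V (z j)) :
    ∃ c : Fin (k+1), ∀ i, i + c ∈ V i := by
  by_contra hno
  push_neg at hno
  -- hno : ∀ c, ∃ i, i + c ∉ V i
  by_cases hc1 : ∃ a : Fin (k+1), ∀ s : Fin (k+1), ∃ x, x ≠ a ∧ x + s ∉ V x
  · -- Case 1 : single AP tuple suffices
    obtain ⟨a, ha⟩ := hc1
    obtain ⟨c, hc⟩ := H {apT k (a+1)} ⟨_, rfl⟩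
    obtain ⟨z, hz, hzc⟩ := hc _ rfl
    rw [Set.mem_singleton_iff] at hz
    subst hz
    obtain ⟨x, hxa, hx⟩ := ha c
    obtain ⟨j, hj⟩ := apT_surj (d := a + 1) (x := x) (fun h => hxa (add_right_cancel h))
    have := hzc j
    rw [hj] at this
    exact hx this
  · push_neg at hc1
    -- hc1 : ∀ a, ∃ s, ∀ x, x ≠ a → x + s ∈ V x
    choose σ P1 using hc1
    have P2 : ∀ a, a + σ a ∉ V a := by
      intro a
      obtain ⟨x, hx⟩ := hno (σ a)
      rcases eq_or_ne x a with rfl | hxa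
      · exact hx
      · exact absurd (P1 a x hxa) hx
    have σinj : Function.Injective σ := by
      intro a a' h
      by_contra hne
      have := P1 a' a hne
      rw [← h] at this
      exact P2 a this
    have σsurj : Function.Surjective σ := Finite.injective_iff_surjective.mp σinj
    have W : ∀ x w : Fin (k+1), w ∈ V x ↔ w ≠ x + σ x := by
      intro x w
      constructor
      · intro hw heq
        rw [heq] at hw
        exact P2 x hw
      · intro hne
        obtain ⟨axw, haxw⟩ := σsurj (w - x)
        have hax : x ≠ axw := by
          intro h
          apply hne
          rw [← h] at haxw
          linear_combination -haxw
        have h1 := P1 axw x hax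
        rw [haxw] at h1
        have : x + (w - x) = w := by ring
        rwa [this] at h1
    by_cases hc2 : ∃ a a' : Fin (k+1), a ≠ a' ∧ σ a' - σ a ≠ (a - a') + (a - a')
    · -- Case 2a : two AP tuples
      obtain ⟨a, a', haa, hσ⟩ := hc2
      obtain ⟨m, hm⟩ := H {apT k (a+1), apT k (a'+1)} ⟨_, Set.mem_insert _ _⟩
      obtain ⟨r1, hr1⟩ := σsurj m
      obtain ⟨r2, hr2⟩ := σsurj (m + (a - a'))
      obtain ⟨r3, hr3⟩ := σsurj (m - (a - a'))
      by_cases h1 : r1 ≠ a ∧ r2 ≠ a'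
      · -- attacker apT (a+1)
        obtain ⟨z, hz, hzc⟩ := hm (apT k (a+1)) (Set.mem_insert _ _)
        simp only [Set.mem_insert_iff, Set.mem_singleton_iff] at hz
        rcases hz with rfl | rfl
        · obtain ⟨j, hj⟩ := apT_surj (d := a + 1) (x := r1)
            (fun h => h1.1 (add_right_cancel h))
          have hmem := hzc j
          rw [hj] at hmem
          rw [W] at hmem
          exact hmem (by rw [hr1])
        · obtain ⟨j, hj⟩ := apT_surj (d := a' + 1) (x := r2)
            (fun h => h1.2 (add_right_cancel h))
          have hmem := hzc j
          rw [hj] at hmem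
          rw [W] at hmem
          rw [apT_apply] at hj hmem
          exact hmem (by linear_combination hj - hr2)
      · -- attacker apT (a'+1)
        rw [not_and_or, not_ne_iff, not_ne_iff] at h1
        have hr1a' : r1 ≠ a' := by
          intro h
          rcases h1 with h1 | h1
          · rw [h1] at h; exact haa h
          · rw [h] at hr1
            rw [h1] at hr2
            have : a - a' = 0 := by linear_combination hr1 - hr2
            exact haa (sub_eq_zero.mp this)
        have hr3a : r3 ≠ a := by
          intro h
          rw [h] at hr3
          rcases h1 with h1 | h1
          · rw [h1] at hr1
            have : a - a' = 0 := by linear_combination hr3 - hr1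
            exact haa (sub_eq_zero.mp this)
          · rw [h1] at hr2
            exact hσ (by linear_combination hr2 - hr3)
        obtain ⟨z, hz, hzc⟩ := hm (apT k (a'+1))
          (Set.mem_insert_of_mem _ rfl)
        simp only [Set.mem_insert_iff, Set.mem_singleton_iff] at hz
        rcases hz with rfl | rfl
        · obtain ⟨j, hj⟩ := apT_surj (d := a + 1) (x := r3)
            (fun h => hr3a (add_right_cancel h))
          have hmem := hzc j
          rw [hj] at hmem
          rw [W] at hmem
          rw [apT_apply] at hj hmem
          exact hmem (by linear_combination hj - hr3)
        · obtain ⟨j, hj⟩ := apT_surj (d := a' + 1) (x := r1)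
            (fun h => hr1a' (add_right_cancel h))
          have hmem := hzc j
          rw [hj] at hmem
          rw [W] at hmem
          exact hmem (by rw [hr1])
    · -- Case 2b : rigid case, V x = univ \ {b - x}
      push_neg at hc2
      set b := σ 0 with hb
      have σform : ∀ x, σ x = b - (x + x) := by
        intro x
        rcases eq_or_ne x 0 with rfl | hx
        · rw [hb]; ring
        · have h := hc2 0 x (Ne.symm hx)
          rw [← hb] at h
          linear_combination h
      have dblinj : ∀ x y : Fin (k+1), x + x = y + y → x = y := by
        intro x y h
        apply σinj
        rw [σform, σform, h]
      have dblsurj : ∀ w : Fin (k+1), ∃ x, x + x = w := by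
        have : Function.Surjective (fun x : Fin (k+1) => x + x) :=
          Finite.injective_iff_surjective.mp (fun x y h => dblinj x y h)
        exact this
      have W2 : ∀ x w : Fin (k+1), w ∈ V x ↔ w ≠ b - x := by
        intro x w
        rw [W]
        have : x + σ x = b - x := by rw [σform]; ring
        rw [this]
      -- numeric facts
      have v1 : (1 : Fin (k+1)).val = 1 := by
        rw [Fin.val_one' (k+1)]
        exact Nat.mod_eq_of_lt (by omega)
      have v2 : (1 + 1 : Fin (k+1)).val = 2 := by
        rw [Fin.val_add, v1]
        exact Nat.mod_eq_of_lt (by omega)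
      have v3 : (1 + 1 + 1 : Fin (k+1)).val = 3 := by
        rw [Fin.val_add, v2, v1]
        exact Nat.mod_eq_of_lt (by omega)
      have hone : (1 : Fin (k+1)) ≠ 0 := by
        intro h
        have := congrArg Fin.val h
        rw [v1, Fin.val_zero] at this
        omega
      have htwo : (1 + 1 : Fin (k+1)) ≠ 0 := by
        intro h
        have := congrArg Fin.val h
        rw [v2, Fin.val_zero] at this
        omega
      have hthree : (1 + 1 + 1 : Fin (k+1)) ≠ 0 := by
        intro h
        have := congrArg Fin.val h
        rw [v3, Fin.val_zero] at this
        omega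
      have hfour : (1 + 1 + 1 + 1 : Fin (k+1)) ≠ 0 := by
        intro h
        have h2 : (1 + 1 : Fin (k+1)) + (1 + 1) = 0 + 0 := by linear_combination h
        exact htwo (dblinj _ _ h2)
      -- the three tuples
      set u : Fin k → Fin (k+1) := fun _ => 0 with hu
      obtain ⟨m, hm⟩ := H {u, apT k (1+1), apT k 0} ⟨u, Set.mem_insert _ _⟩
      by_cases hmb : m = b
      · -- attacker u
        obtain ⟨z, hz, hzc⟩ := hm u (Set.mem_insert _ _)
        simp only [Set.mem_insert_iff, Set.mem_singleton_iff] at hz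
        have key : ∀ j : Fin k, z j = 0 → False := by
          intro j hj
          have hmem := hzc j
          rw [hj] at hmem
          rw [W2] at hmem
          apply hmem
          show (0 : Fin (k+1)) + m = b - 0
          rw [hmb]
          ring
        rcases hz with rfl | rfl | rfl
        · exact key ⟨0, by omega⟩ rfl
        · obtain ⟨j, hj⟩ := apT_surj (d := (1+1 : Fin (k+1))) (x := 0)
            (by intro h; exact hone (by linear_combination -h))
          exact key j hj
        · obtain ⟨j, hj⟩ := apT_surj (d := (0 : Fin (k+1))) (x := 0)
            (by intro h; exact hone (by linear_combination h))
          exact key j hj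
      · by_cases hcase : m = b - 1 ∨ m = b - (1+1)
        · -- attacker apT 0
          obtain ⟨z, hz, hzc⟩ := hm (apT k 0)
            (Set.mem_insert_of_mem _ (Set.mem_insert_of_mem _ rfl))
          simp only [Set.mem_insert_iff, Set.mem_singleton_iff] at hz
          rcases hz with rfl | rfl | rfl
          · -- z = u
            obtain ⟨j, hj⟩ := apT_surj (d := (0 : Fin (k+1))) (x := b - m) (by
              intro h
              rcases hcase with h' | h'
              · exact htwo (by linear_combination h + h')
              · exact hthree (by linear_combination h + h'))
            have hmem := hzc j
            rw [hj] at hmem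
            rw [W2] at hmem
            exact hmem (by show b - m + m = b - (0:Fin (k+1)); ring)
          · -- z = apT (1+1)
            obtain ⟨x, hx⟩ := dblsurj (b - m + (1+1))
            obtain ⟨j, hj⟩ := apT_surj (d := (1+1 : Fin (k+1))) (x := x) (by
              intro h
              exact hmb (by linear_combination hx - 2 * h))
            have hmem := hzc j
            rw [hj] at hmem
            rw [W2] at hmem
            rw [apT_apply] at hj hmem
            exact hmem (by linear_combination hj + hx)
          · -- z = apT 0 (self)
            obtain ⟨x, hx⟩ := dblsurj (b - m)
            obtain ⟨j, hj⟩ := apT_surj (d := (0 : Fin (k+1))) (x := x) (by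
              intro h
              have e : m = b + (1+1) := by linear_combination hx - 2 * h
              rcases hcase with h' | h'
              · exact hthree (by linear_combination h' - e)
              · exact hfour (by linear_combination h' - e))
            have hmem := hzc j
            rw [hj] at hmem
            rw [W2] at hmem
            exact hmem (by linear_combination hx)
        · -- attacker apT (1+1)
          push_neg at hcase
          obtain ⟨hm1, hm2⟩ := hcase
          obtain ⟨z, hz, hzc⟩ := hm (apT k (1+1))
            (Set.mem_insert_of_mem _ (Set.mem_insert _ _))
          simp only [Set.mem_insert_iff, Set.mem_singleton_iff] at hz
          rcases hz with rfl | rfl | rfl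
          · -- z = u
            obtain ⟨j, hj⟩ := apT_surj (d := (1+1 : Fin (k+1))) (x := b - m) (by
              intro h
              exact hm1 (by linear_combination -h))
            have hmem := hzc j
            rw [hj] at hmem
            rw [W2] at hmem
            exact hmem (by show b - m + m = b - (0:Fin (k+1)); ring)
          · -- z = apT (1+1) (self)
            obtain ⟨x, hx⟩ := dblsurj (b - m)
            obtain ⟨j, hj⟩ := apT_surj (d := (1+1 : Fin (k+1))) (x := x) (by
              intro h
              exact hm2 (by linear_combination hx - 2 * h))
            have hmem := hzc j
            rw [hj] at hmem
            rw [W2] at hmem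
            exact hmem (by linear_combination hx)
          · -- z = apT 0
            obtain ⟨x, hx⟩ := dblsurj (b - m - (1+1))
            obtain ⟨j, hj⟩ := apT_surj (d := (0 : Fin (k+1))) (x := x) (by
              intro h
              exact hmb (by linear_combination hx - 2 * h))
            have hmem := hzc j
            rw [hj] at hmem
            rw [W2] at hmem
            rw [apT_apply] at hj hmem
            exact hmem (by linear_combination hj + hx)

/-- `G` has a `G`-marriage subject to `V`: some `g ∈ G` satisfies `g i ∈ V i` for all `i`. -/
def hasMarriage {n : ℕ} (G : Subgroup (Equiv.Perm (Fin n))) (V : Fin n → Set (Fin n)) : Prop :=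
  ∃ g ∈ G, ∀ i, g i ∈ V i

/-- The orbit condition: for every nonempty `Y ⊆ [n]` there is `g ∈ G` with `Y^g ⊆ ⋃_{y ∈ Y} V y`. -/
def orbitCondition {n : ℕ} (G : Subgroup (Equiv.Perm (Fin n))) (V : Fin n → Set (Fin n)) : Prop :=
  ∀ Y : Set (Fin n), Y.Nonempty → ∃ g ∈ G, (⇑g) '' Y ⊆ ⋃ y ∈ Y, V y

/-- The `k`-orbit condition: for every nonempty set `Y` of `k`-tuples there is `g ∈ G` such that
`Y^g ⊆ ⋃_{y ∈ Y} V_{y 0} × ⋯ × V_{y (k-1)}`. -/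
def kOrbitCondition {n : ℕ} (k : ℕ) (G : Subgroup (Equiv.Perm (Fin n))) (V : Fin n → Set (Fin n)) : Prop :=
  ∀ Y : Set (Fin k → Fin n), Y.Nonempty →
    ∃ g ∈ G, ∀ y ∈ Y, ∃ z ∈ Y, ∀ j, g (y j) ∈ V (z j)

/-- For `n ≥ 4` and `G` the cyclic group generated by the `n`-cycle `(1 2 ⋯ n)`,
`G` satisfies the `(n-1)`-orbit condition subject to `V` iff `G` has a
`G`-marriage subject to `V`. -/
theorem stmt_6 (n : ℕ) (hn : 4 ≤ n) (V : Fin n → Set (Fin n)) :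
    kOrbitCondition (n - 1) (Subgroup.zpowers (finRotate n)) V ↔
      hasMarriage (Subgroup.zpowers (finRotate n)) V := by
  obtain ⟨k, rfl⟩ : ∃ k, n = k + 1 := ⟨n - 1, by omega⟩
  have hk : 3 ≤ k := by omega
  constructor
  · intro H
    have H' : ∀ Y : Set (Fin k → Fin (k+1)), Y.Nonempty →
        ∃ c : Fin (k+1), ∀ y ∈ Y, ∃ z ∈ Y, ∀ j, y j + c ∈ V (z j) := by
      intro Y hY
      obtain ⟨g, hg, hA⟩ := H Y hY
      obtain ⟨c, hc⟩ := mem_zpowers_c hg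
      refine ⟨c, fun y hy => ?_⟩
      obtain ⟨z, hz, hzc⟩ := hA y hy
      exact ⟨z, hz, fun j => by rw [← hc]; exact hzc j⟩
    obtain ⟨c, hc⟩ := core k hk V H'
    refine ⟨(finRotate (k+1)) ^ (c.val), Subgroup.npow_mem_zpowers _ _, fun i => ?_⟩
    rw [rot_pow, Fin.cast_val_eq_self]
    exact hc i
  · rintro ⟨g, hg, hmar⟩ Y hY
    exact ⟨g, hg, fun y hy => ⟨y, hy, fun j => hmar (y j)⟩⟩
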